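/- For every integer $d \geq 2$, $\frac{(d-1)^{d-1}}{(d^2 - 2d - 1)^{d/2 - 1}} < d$ whenever $d^2 - 2d - 1 > 0$, i.e., for all integers $d \geq 3$. -/

import Mathlib

/-- Cubic truncation of the binomial series gives a lower bound for `(1-x)^n`. -/
lemma bernoulli_cubic (n : ℕ) (x : ℝ) (h0 : 0 ≤ x) (h1 : x ≤ 1) :
    1 - n * x + (n * (n - 1) / 2) * x ^ 2 - (n * (n - 1) * (n - 2) / 6) * x ^ 3
      ≤ (1 - x) ^ n := by
  induction n with
  | zero => norm_num
  | succ n ih =>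
    have hc3 : (0:ℝ) ≤ (n:ℝ) * ((n:ℝ) - 1) * ((n:ℝ) - 2) := by
      rcases Nat.lt_or_ge n 3 with h | h
      · interval_cases n <;> norm_num
      · have h3 : (3:ℝ) ≤ (n:ℝ) := by exact_mod_cast h
        exact mul_nonneg (mul_nonneg (by linarith) (by linarith)) (by linarith)
    have hx : (0:ℝ) ≤ 1 - x := by linarith
    have step : (1 - x) * (1 - n * x + (n * (n - 1) / 2) * x ^ 2
        - (n * (n - 1) * (n - 2) / 6) * x ^ 3) ≤ (1 - x) ^ (n + 1) := by
      calc (1 - x) * (1 - n * x + (n * (n - 1) / 2) * x ^ 2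
            - (n * (n - 1) * (n - 2) / 6) * x ^ 3)
          ≤ (1 - x) * (1 - x) ^ n := mul_le_mul_of_nonneg_left ih hx
        _ = (1 - x) ^ (n + 1) := by ring
    have h4 : (0:ℝ) ≤ (n:ℝ) * ((n:ℝ) - 1) * ((n:ℝ) - 2) / 6 * x ^ 4 := by
      apply mul_nonneg (by linarith) (pow_nonneg h0 4)
    push_cast
    nlinarith [step]

theorem conjectured_rate_lt_d (d : ℕ) (hd : 3 ≤ d) :
    ((d : ℝ) - 1) ^ ((d : ℝ) - 1)
        / ((d : ℝ) ^ 2 - 2 * d - 1) ^ ((d : ℝ) / 2 - 1)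
      < d := by
  have hd3 : (3:ℝ) ≤ (d:ℝ) := by exact_mod_cast hd
  set a : ℝ := (d:ℝ) - 1 with ha_def
  have ha2 : (2:ℝ) ≤ a := by simp [ha_def]; linarith
  have ha0 : (0:ℝ) < a := by linarith
  have hb : (0:ℝ) < (d:ℝ) ^ 2 - 2 * d - 1 := by nlinarith
  rw [div_lt_iff₀ (Real.rpow_pos_of_pos hb _)]
  have hL0 : (0:ℝ) < a ^ ((d:ℝ) - 1) := Real.rpow_pos_of_pos ha0 _
  have hR0 : (0:ℝ) < (d:ℝ) * ((d:ℝ) ^ 2 - 2 * d - 1) ^ ((d:ℝ) / 2 - 1) :=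
    mul_pos (by linarith) (Real.rpow_pos_of_pos hb _)
  apply lt_of_pow_lt_pow_left₀ 2 hR0.le
  -- rewrite squares of rpow as rpow of doubled exponents, then as Nat powers
  have hn : d - 2 + 2 = d := Nat.sub_add_cancel (by omega)
  have hsqL : (a ^ ((d:ℝ) - 1)) ^ 2 = a ^ (2 * (d - 2) + 2) := by
    rw [← Real.rpow_natCast (a ^ ((d:ℝ) - 1)) 2, ← Real.rpow_mul ha0.le,
      ← Real.rpow_natCast a (2 * (d - 2) + 2)]
    congr 1
    have : ((d - 2 : ℕ) : ℝ) = (d:ℝ) - 2 := by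
      push_cast [Nat.cast_sub (by omega : 2 ≤ d)]; ring
    push_cast [this]; ring
  have hsqR : (((d:ℝ) ^ 2 - 2 * d - 1) ^ ((d:ℝ) / 2 - 1)) ^ 2
      = ((d:ℝ) ^ 2 - 2 * d - 1) ^ (d - 2 : ℕ) := by
    rw [← Real.rpow_natCast (((d:ℝ) ^ 2 - 2 * d - 1) ^ ((d:ℝ) / 2 - 1)) 2,
      ← Real.rpow_mul hb.le, ← Real.rpow_natCast ((d:ℝ) ^ 2 - 2 * d - 1) (d - 2)]
    congr 1
    have : ((d - 2 : ℕ) : ℝ) = (d:ℝ) - 2 := by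
      push_cast [Nat.cast_sub (by omega : 2 ≤ d)]; ring
    push_cast [this]; ring
  rw [mul_pow, hsqL, hsqR]
  -- now a Nat-power inequality
  set n : ℕ := d - 2 with hn_def
  have hnc : (n:ℝ) = a - 1 := by
    push_cast [hn_def, Nat.cast_sub (by omega : 2 ≤ d)]; simp [ha_def]; ring
  set x : ℝ := 2 / a ^ 2 with hx_def
  have hx0 : 0 ≤ x := by positivity
  have hx1 : x ≤ 1 := by
    rw [hx_def, div_le_one (by positivity)]; nlinarith
  have hfac : (d:ℝ) ^ 2 - 2 * d - 1 = a ^ 2 * (1 - x) := by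
    field_simp [hx_def]
    rw [hx_def]; field_simp; rw [ha_def]; ring
  have hber := bernoulli_cubic n x hx0 hx1
  have hpoly : a ^ 2 < ((d:ℝ)) ^ 2 *
      (1 - n * x + (n * (n - 1) / 2) * x ^ 2 - (n * (n - 1) * (n - 2) / 6) * x ^ 3) := by
    have hdca : (d:ℝ) = a + 1 := by simp [ha_def]
    rw [hdca, hnc, hx_def]
    rw [show (1 - (a-1) * (2/a^2) + ((a-1) * ((a-1) - 1) / 2) * (2/a^2) ^ 2
        - ((a-1) * ((a-1) - 1) * ((a-1) - 2) / 6) * (2/a^2) ^ 3)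
        = (3*a^6 - 6*(a-1)*a^4 + 6*(a-1)*(a-2)*a^2 - 4*(a-1)*(a-2)*(a-3)) / (3*a^6) by
      field_simp; ring]
    rw [← mul_div_assoc, lt_div_iff₀ (by positivity)]
    have key : (a+1)^2 * (3*a^6 - 6*(a-1)*a^4 + 6*(a-1)*(a-2)*a^2 - 4*(a-1)*(a-2)*(a-3))
        - a^2 * (3*a^6) = 3*a^6 - 4*a^5 + 4*a^4 + 6*a^3 - 28*a^2 + 4*a + 24 := by ring
    have hq : 0 < 3*a^6 - 4*a^5 + 4*a^4 + 6*a^3 - 28*a^2 + 4*a + 24 := by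
      nlinarith [pow_pos ha0 4, pow_pos ha0 3, sq_nonneg (a-2), pow_pos ha0 2,
        mul_nonneg (mul_nonneg (sub_nonneg.2 ha2) (sub_nonneg.2 ha2)) (pow_pos ha0 4).le,
        mul_nonneg (sub_nonneg.2 ha2) (pow_pos ha0 5).le]
    nlinarith [hq, key]
  calc a ^ (2 * n + 2) = (a^2)^n * a^2 := by rw [pow_add, pow_mul]
    _ < (a^2)^n * ((d:ℝ)^2 * (1 - n * x + (n * (n - 1) / 2) * x ^ 2
        - (n * (n - 1) * (n - 2) / 6) * x ^ 3)) := by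
        apply mul_lt_mul_of_pos_left hpoly (by positivity)
    _ ≤ (a^2)^n * ((d:ℝ)^2 * (1-x)^n) := by
        apply mul_le_mul_of_nonneg_left _ (by positivity)
        apply mul_le_mul_of_nonneg_left hber (by positivity)
    _ = (d:ℝ)^2 * ((d:ℝ)^2 - 2*d - 1)^n := by rw [hfac, mul_pow]; ring
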